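/- Let λ₁,λ₂,λ₃,λ₄ ∈ ℝ and let 𝔤 be the 4-dimensional real Lie algebra with orthonormal basis X₁,X₂,X₃,X₄ (inner product g) and brackets [X₁,X₂] = −[X₃,X₄] = λ₁X₁ + λ₂X₂ + λ₃X₃ + λ₄X₄, [X₁,X₃] = [X₂,X₄] = λ₄X₁ − λ₃X₂ + λ₂X₃ − λ₁X₄, [X₂,X₃] = [X₁,X₄] = 0. Define ∇ by 2g(∇ₓy,z) = g([x,y],z) + g([z,x],y) + g([z,y],x) and R(x,y,z,w) = g(∇ₓ∇_y z − ∇_y∇ₓ z − ∇_{[x,y]} z, w). Set ρ(y,z) = Σᵢ R(Xᵢ,y,z,Xᵢ), τ = Σⱼ ρ(Xⱼ,Xⱼ), π₁(x,y,z,w) = g(y,z)g(x,w) − g(x,z)g(y,w), and ψ₁(ρ)(x,y,z,w) = g(y,z)ρ(x,w) − g(x,z)ρ(y,w) + ρ(y,z)g(x,w) − ρ(x,z)g(y,w). Then the Weyl tensor W = R − (1/2){ψ₁(ρ) − (τ/3)π₁} is identically zero; i.e. the example manifold is conformally flat with respect to the Levi-Civita connection. -/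

import Mathlib

set_option maxHeartbeats 2000000
set_option maxRecDepth 8000

private def cB (l1 l2 l3 l4 : ℝ) (x y : Fin 4 → ℝ) : Fin 4 → ℝ :=
  ![((-1)*l4*(x 3)*(y 1) + (-1)*l4*(x 2)*(y 0) + l4*(x 1)*(y 3) + l4*(x 0)*(y 2) + l1*(x 3)*(y 2) + (-1)*l1*(x 2)*(y 3) + (-1)*l1*(x 1)*(y 0) + l1*(x 0)*(y 1)),
    (l3*(x 3)*(y 1) + l3*(x 2)*(y 0) + (-1)*l3*(x 1)*(y 3) + (-1)*l3*(x 0)*(y 2) + l2*(x 3)*(y 2) + (-1)*l2*(x 2)*(y 3) + (-1)*l2*(x 1)*(y 0) + l2*(x 0)*(y 1)),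
    (l3*(x 3)*(y 2) + (-1)*l3*(x 2)*(y 3) + (-1)*l3*(x 1)*(y 0) + l3*(x 0)*(y 1) + (-1)*l2*(x 3)*(y 1) + (-1)*l2*(x 2)*(y 0) + l2*(x 1)*(y 3) + l2*(x 0)*(y 2)),
    (l4*(x 3)*(y 2) + (-1)*l4*(x 2)*(y 3) + (-1)*l4*(x 1)*(y 0) + l4*(x 0)*(y 1) + l1*(x 3)*(y 1) + l1*(x 2)*(y 0) + (-1)*l1*(x 1)*(y 3) + (-1)*l1*(x 0)*(y 2))]

private def nF (l1 l2 l3 l4 : ℝ) (x y : Fin 4 → ℝ) : Fin 4 → ℝ :=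
  ![(l4*(x 1)*(y 3) + l4*(x 0)*(y 2) + l2*(x 2)*(y 2) + l2*(x 1)*(y 1) + (-1)*l1*(x 2)*(y 3) + l1*(x 0)*(y 1)),
    ((-1)*l3*(x 1)*(y 3) + (-1)*l3*(x 0)*(y 2) + l2*(x 3)*(y 2) + (-1)*l2*(x 1)*(y 0) + (-1)*l1*(x 3)*(y 3) + (-1)*l1*(x 0)*(y 0)),
    ((-1)*l4*(x 3)*(y 3) + (-1)*l4*(x 0)*(y 0) + (-1)*l3*(x 2)*(y 3) + l3*(x 0)*(y 1) + (-1)*l2*(x 3)*(y 1) + (-1)*l2*(x 2)*(y 0)),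
    (l4*(x 3)*(y 2) + (-1)*l4*(x 1)*(y 0) + l3*(x 2)*(y 2) + l3*(x 1)*(y 1) + l1*(x 3)*(y 1) + l1*(x 2)*(y 0))]

private def RP (l1 l2 l3 l4 : ℝ) (x y z w : Fin 4 → ℝ) : ℝ :=
  (l4*l4*(x 3)*(y 2)*(z 3)*(w 2) + (-1)*l4*l4*(x 3)*(y 2)*(z 2)*(w 3) + l4*l4*(x 3)*(y 0)*(z 3)*(w 0) + (-1)*l4*l4*(x 3)*(y 0)*(z 0)*(w 3) + (-1)*l4*l4*(x 2)*(y 3)*(z 3)*(w 2) + l4*l4*(x 2)*(y 3)*(z 2)*(w 3) + l4*l4*(x 2)*(y 0)*(z 2)*(w 0) + (-1)*l4*l4*(x 2)*(y 0)*(z 0)*(w 2) + (-1)*l4*l4*(x 0)*(y 3)*(z 3)*(w 0) + l4*l4*(x 0)*(y 3)*(z 0)*(w 3) + (-1)*l4*l4*(x 0)*(y 2)*(z 2)*(w 0) + l4*l4*(x 0)*(y 2)*(z 0)*(w 2) + (-1)*l3*l4*(x 3)*(y 1)*(z 3)*(w 0) + l3*l4*(x 3)*(y 1)*(z 0)*(w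 3) + (-1)*l3*l4*(x 3)*(y 0)*(z 3)*(w 1) + l3*l4*(x 3)*(y 0)*(z 1)*(w 3) + (-1)*l3*l4*(x 2)*(y 1)*(z 2)*(w 0) + l3*l4*(x 2)*(y 1)*(z 0)*(w 2) + (-1)*l3*l4*(x 2)*(y 0)*(z 2)*(w 1) + l3*l4*(x 2)*(y 0)*(z 1)*(w 2) + l3*l4*(x 1)*(y 3)*(z 3)*(w 0) + (-1)*l3*l4*(x 1)*(y 3)*(z 0)*(w 3) + l3*l4*(x 1)*(y 2)*(z 2)*(w 0) + (-1)*l3*l4*(x 1)*(y 2)*(z 0)*(w 2) + l3*l4*(x 0)*(y 3)*(z 3)*(w 1) + (-1)*l3*l4*(x 0)*(y 3)*(z 1)*(w 3) + l3*l4*(x 0)*(y 2)*(z 2)*(w 1) + (-1)*l3*l4*(x 0)*(y 2)*(z 1)*(w 2) + l3*l3*(x 3)*(y 2)*(z 3)*(w 2) + (-1)*l3*l3*(x 3)*(y 2)*(z 2)*(w 3) + l3*l3*(x 3)*(y 1)*(z 3)*(w 1) + (-1)*l3*l3*(x 3)*(y 1)*(z 1)*(w 3) + (-1)*l3*l3*(x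 2)*(y 3)*(z 3)*(w 2) + l3*l3*(x 2)*(y 3)*(z 2)*(w 3) + l3*l3*(x 2)*(y 1)*(z 2)*(w 1) + (-1)*l3*l3*(x 2)*(y 1)*(z 1)*(w 2) + (-1)*l3*l3*(x 1)*(y 3)*(z 3)*(w 1) + l3*l3*(x 1)*(y 3)*(z 1)*(w 3) + (-1)*l3*l3*(x 1)*(y 2)*(z 2)*(w 1) + l3*l3*(x 1)*(y 2)*(z 1)*(w 2) + (-1)*l2*l4*(x 3)*(y 2)*(z 2)*(w 1) + l2*l4*(x 3)*(y 2)*(z 1)*(w 2) + l2*l4*(x 3)*(y 0)*(z 1)*(w 0) + (-1)*l2*l4*(x 3)*(y 0)*(z 0)*(w 1) + l2*l4*(x 2)*(y 3)*(z 2)*(w 1) + (-1)*l2*l4*(x 2)*(y 3)*(z 1)*(w 2) + (-1)*l2*l4*(x 2)*(y 1)*(z 3)*(w 2) + l2*l4*(x 2)*(y 1)*(z 2)*(w 3) + l2*l4*(x 1)*(y 2)*(z 3)*(w 2) + (-1)*l2*l4*(x 1)*(y 2)*(z 2)*(w 3) + l2*l4*(x 1)*(y 0)*(z 3)*(w 0)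 + (-1)*l2*l4*(x 1)*(y 0)*(z 0)*(w 3) + (-1)*l2*l4*(x 0)*(y 3)*(z 1)*(w 0) + l2*l4*(x 0)*(y 3)*(z 0)*(w 1) + (-1)*l2*l4*(x 0)*(y 1)*(z 3)*(w 0) + l2*l4*(x 0)*(y 1)*(z 0)*(w 3) + (-1)*l2*l3*(x 3)*(y 2)*(z 2)*(w 0) + l2*l3*(x 3)*(y 2)*(z 0)*(w 2) + (-1)*l2*l3*(x 3)*(y 1)*(z 1)*(w 0) + l2*l3*(x 3)*(y 1)*(z 0)*(w 1) + l2*l3*(x 2)*(y 3)*(z 2)*(w 0) + (-1)*l2*l3*(x 2)*(y 3)*(z 0)*(w 2) + (-1)*l2*l3*(x 2)*(y 0)*(z 3)*(w 2) + l2*l3*(x 2)*(y 0)*(z 2)*(w 3) + l2*l3*(x 1)*(y 3)*(z 1)*(w 0) + (-1)*l2*l3*(x 1)*(y 3)*(z 0)*(w 1) + (-1)*l2*l3*(x 1)*(y 0)*(z 3)*(w 1) + l2*l3*(x 1)*(y 0)*(z 1)*(w 3) + l2*l3*(x 0)*(y 2)*(z 3)*(w 2) + (-1)*l2*l3*(x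 0)*(y 2)*(z 2)*(w 3) + l2*l3*(x 0)*(y 1)*(z 3)*(w 1) + (-1)*l2*l3*(x 0)*(y 1)*(z 1)*(w 3) + l2*l2*(x 2)*(y 1)*(z 2)*(w 1) + (-1)*l2*l2*(x 2)*(y 1)*(z 1)*(w 2) + l2*l2*(x 2)*(y 0)*(z 2)*(w 0) + (-1)*l2*l2*(x 2)*(y 0)*(z 0)*(w 2) + (-1)*l2*l2*(x 1)*(y 2)*(z 2)*(w 1) + l2*l2*(x 1)*(y 2)*(z 1)*(w 2) + l2*l2*(x 1)*(y 0)*(z 1)*(w 0) + (-1)*l2*l2*(x 1)*(y 0)*(z 0)*(w 1) + (-1)*l2*l2*(x 0)*(y 2)*(z 2)*(w 0) + l2*l2*(x 0)*(y 2)*(z 0)*(w 2) + (-1)*l2*l2*(x 0)*(y 1)*(z 1)*(w 0) + l2*l2*(x 0)*(y 1)*(z 0)*(w 1) + l1*l4*(x 3)*(y 2)*(z 3)*(w 1) + (-1)*l1*l4*(x 3)*(y 2)*(z 1)*(w 3) + l1*l4*(x 3)*(y 1)*(z 3)*(w 2) + (-1)*l1*l4*(x 3)*(y 1)*(z 2)*(w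 3) + (-1)*l1*l4*(x 2)*(y 3)*(z 3)*(w 1) + l1*l4*(x 2)*(y 3)*(z 1)*(w 3) + l1*l4*(x 2)*(y 0)*(z 1)*(w 0) + (-1)*l1*l4*(x 2)*(y 0)*(z 0)*(w 1) + (-1)*l1*l4*(x 1)*(y 3)*(z 3)*(w 2) + l1*l4*(x 1)*(y 3)*(z 2)*(w 3) + l1*l4*(x 1)*(y 0)*(z 2)*(w 0) + (-1)*l1*l4*(x 1)*(y 0)*(z 0)*(w 2) + (-1)*l1*l4*(x 0)*(y 2)*(z 1)*(w 0) + l1*l4*(x 0)*(y 2)*(z 0)*(w 1) + (-1)*l1*l4*(x 0)*(y 1)*(z 2)*(w 0) + l1*l4*(x 0)*(y 1)*(z 0)*(w 2) + l1*l3*(x 3)*(y 2)*(z 3)*(w 0) + (-1)*l1*l3*(x 3)*(y 2)*(z 0)*(w 3) + l1*l3*(x 3)*(y 0)*(z 3)*(w 2) + (-1)*l1*l3*(x 3)*(y 0)*(z 2)*(w 3) + (-1)*l1*l3*(x 2)*(y 3)*(z 3)*(w 0) + l1*l3*(x 2)*(y 3)*(z 0)*(w 3) + (-1)*l1*l3*(x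 2)*(y 1)*(z 1)*(w 0) + l1*l3*(x 2)*(y 1)*(z 0)*(w 1) + l1*l3*(x 1)*(y 2)*(z 1)*(w 0) + (-1)*l1*l3*(x 1)*(y 2)*(z 0)*(w 1) + (-1)*l1*l3*(x 1)*(y 0)*(z 2)*(w 1) + l1*l3*(x 1)*(y 0)*(z 1)*(w 2) + (-1)*l1*l3*(x 0)*(y 3)*(z 3)*(w 2) + l1*l3*(x 0)*(y 3)*(z 2)*(w 3) + l1*l3*(x 0)*(y 1)*(z 2)*(w 1) + (-1)*l1*l3*(x 0)*(y 1)*(z 1)*(w 2) + (-1)*l1*l2*(x 3)*(y 1)*(z 2)*(w 1) + l1*l2*(x 3)*(y 1)*(z 1)*(w 2) + (-1)*l1*l2*(x 3)*(y 0)*(z 2)*(w 0) + l1*l2*(x 3)*(y 0)*(z 0)*(w 2) + (-1)*l1*l2*(x 2)*(y 1)*(z 3)*(w 1) + l1*l2*(x 2)*(y 1)*(z 1)*(w 3) + (-1)*l1*l2*(x 2)*(y 0)*(z 3)*(w 0) + l1*l2*(x 2)*(y 0)*(z 0)*(w 3) + l1*l2*(x 1)*(y 3)*(z 2)*(w 1)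 + (-1)*l1*l2*(x 1)*(y 3)*(z 1)*(w 2) + l1*l2*(x 1)*(y 2)*(z 3)*(w 1) + (-1)*l1*l2*(x 1)*(y 2)*(z 1)*(w 3) + l1*l2*(x 0)*(y 3)*(z 2)*(w 0) + (-1)*l1*l2*(x 0)*(y 3)*(z 0)*(w 2) + l1*l2*(x 0)*(y 2)*(z 3)*(w 0) + (-1)*l1*l2*(x 0)*(y 2)*(z 0)*(w 3) + l1*l1*(x 3)*(y 1)*(z 3)*(w 1) + (-1)*l1*l1*(x 3)*(y 1)*(z 1)*(w 3) + l1*l1*(x 3)*(y 0)*(z 3)*(w 0) + (-1)*l1*l1*(x 3)*(y 0)*(z 0)*(w 3) + (-1)*l1*l1*(x 1)*(y 3)*(z 3)*(w 1) + l1*l1*(x 1)*(y 3)*(z 1)*(w 3) + l1*l1*(x 1)*(y 0)*(z 1)*(w 0) + (-1)*l1*l1*(x 1)*(y 0)*(z 0)*(w 1) + (-1)*l1*l1*(x 0)*(y 3)*(z 3)*(w 0) + l1*l1*(x 0)*(y 3)*(z 0)*(w 3) + (-1)*l1*l1*(x 0)*(y 1)*(z 1)*(w 0) + l1*l1*(x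 0)*(y 1)*(z 0)*(w 1))

private def RHO (l1 l2 l3 l4 : ℝ) (a b : Fin 4 → ℝ) : ℝ :=
  ((-2)*l4*l4*(a 3)*(b 3) + (-2)*l4*l4*(a 2)*(b 2) + (-2)*l4*l4*(a 0)*(b 0) + (2)*l3*l4*(a 1)*(b 0) + (2)*l3*l4*(a 0)*(b 1) + (-2)*l3*l3*(a 3)*(b 3) + (-2)*l3*l3*(a 2)*(b 2) + (-2)*l3*l3*(a 1)*(b 1) + (-2)*l2*l4*(a 3)*(b 1) + (-2)*l2*l4*(a 1)*(b 3) + (-2)*l2*l3*(a 3)*(b 0) + (-2)*l2*l3*(a 0)*(b 3) + (-2)*l2*l2*(a 2)*(b 2) + (-2)*l2*l2*(a 1)*(b 1) + (-2)*l2*l2*(a 0)*(b 0) + (-2)*l1*l4*(a 2)*(b 1) + (-2)*l1*l4*(a 1)*(b 2) + (-2)*l1*l3*(a 2)*(b 0) + (-2)*l1*l3*(a 0)*(b 2) + (2)*l1*l2*(a 3)*(b 2) + (2)*l1*l2*(a 2)*(b 3) + (-2)*l1*l1*(a 3)*(b 3) + (-2)*l1*l1*(a 1)*(b 1) + (-2)*l1*l1*(a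 0)*(b 0))

private def TAU (l1 l2 l3 l4 : ℝ) : ℝ :=
  ((-6)*l4*l4 + (-6)*l3*l3 + (-6)*l2*l2 + (-6)*l1*l1)

private lemma rho_poly (l1 l2 l3 l4 : ℝ) (a b : Fin 4 → ℝ) :
    RP l1 l2 l3 l4 ![1,0,0,0] a b ![1,0,0,0] + RP l1 l2 l3 l4 ![0,1,0,0] a b ![0,1,0,0]
    + RP l1 l2 l3 l4 ![0,0,1,0] a b ![0,0,1,0] + RP l1 l2 l3 l4 ![0,0,0,1] a b ![0,0,0,1]
    = RHO l1 l2 l3 l4 a b := by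
  delta RP RHO
  simp only [Matrix.cons_val_zero, Matrix.cons_val_one, Matrix.head_cons, Matrix.cons_val_two,
    Matrix.tail_cons, Matrix.cons_val_three]
  ring

private lemma tau_poly (l1 l2 l3 l4 : ℝ) :
    RHO l1 l2 l3 l4 ![1,0,0,0] ![1,0,0,0] + RHO l1 l2 l3 l4 ![0,1,0,0] ![0,1,0,0]
    + RHO l1 l2 l3 l4 ![0,0,1,0] ![0,0,1,0] + RHO l1 l2 l3 l4 ![0,0,0,1] ![0,0,0,1]
    = TAU l1 l2 l3 l4 := by
  delta RHO TAU
  simp only [Matrix.cons_val_zero, Matrix.cons_val_one, Matrix.head_cons, Matrix.cons_val_two,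
    Matrix.tail_cons, Matrix.cons_val_three]
  ring

open scoped RealInnerProductSpace

/-- The example manifold of the paper is conformally flat with respect
to the Levi-Civita connection: its Weyl tensor `W = R − (1/2){ψ₁(ρ) − (τ/3)π₁}`
vanishes identically. -/
theorem statement_15
    (l1 l2 l3 l4 : ℝ)
    (X : Fin 4 → EuclideanSpace ℝ (Fin 4))
    (hX : ∀ i, X i = EuclideanSpace.single i 1)
    (bracket : EuclideanSpace ℝ (Fin 4) →ₗ[ℝ] EuclideanSpace ℝ (Fin 4) →ₗ[ℝ] EuclideanSpace ℝ (Fin 4))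
    (hskew : ∀ x y, bracket x y = - bracket y x)
    (hjacobi : ∀ x y z,
      bracket (bracket x y) z + bracket (bracket y z) x + bracket (bracket z x) y = 0)
    (h12 : bracket (X 0) (X 1) = l1 • X 0 + l2 • X 1 + l3 • X 2 + l4 • X 3)
    (h34 : bracket (X 2) (X 3) = -(l1 • X 0 + l2 • X 1 + l3 • X 2 + l4 • X 3))
    (h13 : bracket (X 0) (X 2) = l4 • X 0 - l3 • X 1 + l2 • X 2 - l1 • X 3)
    (h24 : bracket (X 1) (X 3) = l4 • X 0 - l3 • X 1 + l2 • X 2 - l1 • X 3)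
    (h23 : bracket (X 1) (X 2) = 0)
    (h14 : bracket (X 0) (X 3) = 0)
    (nabla : EuclideanSpace ℝ (Fin 4) → EuclideanSpace ℝ (Fin 4) → EuclideanSpace ℝ (Fin 4))
    (hKoszul : ∀ x y z, 2 * ⟪nabla x y, z⟫
      = ⟪bracket x y, z⟫ + ⟪bracket z x, y⟫ + ⟪bracket z y, x⟫)
    (R : EuclideanSpace ℝ (Fin 4) → EuclideanSpace ℝ (Fin 4) → EuclideanSpace ℝ (Fin 4) → EuclideanSpace ℝ (Fin 4) → ℝ)
    (hR : ∀ x y z w,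
      R x y z w = ⟪nabla x (nabla y z) - nabla y (nabla x z) - nabla (bracket x y) z, w⟫) :
    ∀ x y z w,
      R x y z w - (1 / 2) *
        ((⟪y, z⟫ * (∑ i, R (X i) x w (X i)) - ⟪x, z⟫ * (∑ i, R (X i) y w (X i))
            + (∑ i, R (X i) y z (X i)) * ⟪x, w⟫ - (∑ i, R (X i) x z (X i)) * ⟪y, w⟫)
          - ((∑ j, ∑ i, R (X i) (X j) (X j) (X i)) / 3) * (⟪y, z⟫ * ⟪x, w⟫ - ⟪x, z⟫ * ⟪y, w⟫)) = 0 := by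
  have hin : ∀ u v : EuclideanSpace ℝ (Fin 4),
      ⟪u, v⟫ = u 0 * v 0 + u 1 * v 1 + u 2 * v 2 + u 3 * v 3 := by
    intro u v
    simp [PiLp.inner_apply, RCLike.inner_apply, Fin.sum_univ_four]
    ring
  have hexp : ∀ v : EuclideanSpace ℝ (Fin 4), v = ∑ i, v i • X i := by
    intro v
    apply PiLp.ext
    intro k
    fin_cases k <;>
      simp [hX, Fin.sum_univ_four, EuclideanSpace.single_apply, PiLp.add_apply, PiLp.smul_apply]
  have hdiag : ∀ v, bracket v v = 0 := by
    intro v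
    have h := hskew v v
    have h2 : (2 : ℝ) • bracket v v = 0 := by
      rw [two_smul]; nth_rewrite 2 [h]; abel
    simpa using h2
  have h21 : bracket (X 1) (X 0) = -(l1 • X 0 + l2 • X 1 + l3 • X 2 + l4 • X 3) := by
    rw [hskew, h12]
  have h43 : bracket (X 3) (X 2) = l1 • X 0 + l2 • X 1 + l3 • X 2 + l4 • X 3 := by
    rw [hskew, h34, neg_neg]
  have h31 : bracket (X 2) (X 0) = -(l4 • X 0 - l3 • X 1 + l2 • X 2 - l1 • X 3) := by
    rw [hskew, h13]
  have h42 : bracket (X 3) (X 1) = -(l4 • X 0 - l3 • X 1 + l2 • X 2 - l1 • X 3) := by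
    rw [hskew, h24]
  have h32 : bracket (X 2) (X 1) = 0 := by
    rw [hskew, h23, neg_zero]
  have h41 : bracket (X 3) (X 0) = 0 := by
    rw [hskew, h14, neg_zero]
  have hXc : ∀ (m k : Fin 4), X m k = if k = m then 1 else 0 := by
    intro m k
    rw [hX]
    exact EuclideanSpace.single_apply m 1 k
  have hX0 : X 0 = (![1,0,0,0] : Fin 4 → ℝ) := by
    rw [hX]; funext k; fin_cases k <;> simp [EuclideanSpace.single_apply]
  have hX1 : X 1 = (![0,1,0,0] : Fin 4 → ℝ) := by
    rw [hX]; funext k; fin_cases k <;> simp [EuclideanSpace.single_apply]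
  have hX2 : X 2 = (![0,0,1,0] : Fin 4 → ℝ) := by
    rw [hX]; funext k; fin_cases k <;> simp [EuclideanSpace.single_apply]
  have hX3 : X 3 = (![0,0,0,1] : Fin 4 → ℝ) := by
    rw [hX]; funext k; fin_cases k <;> simp [EuclideanSpace.single_apply]
  -- bracket in coordinates
  have hBk : ∀ a b : EuclideanSpace ℝ (Fin 4), ∀ k, bracket a b k = cB l1 l2 l3 l4 a b k := by
    intro a b k
    have ha := hexp a
    have hb := hexp b
    nth_rewrite 1 [ha, hb]
    simp only [map_sum, map_add, map_smul, LinearMap.sum_apply, LinearMap.add_apply,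
      LinearMap.smul_apply, Fin.sum_univ_four,
      h12, h13, h14, h23, h24, h34, h21, h31, h41, h32, h42, h43, hdiag]
    fin_cases k <;>
      · simp [hXc, PiLp.add_apply, PiLp.smul_apply, PiLp.neg_apply,
          PiLp.sub_apply, PiLp.zero_apply, cB]
        ring
  -- nabla in coordinates
  have hnk : ∀ a b : EuclideanSpace ℝ (Fin 4), ∀ k, nabla a b k = nF l1 l2 l3 l4 a b k := by
    intro a b k
    have h := hKoszul a b (X k)
    rw [hin, hin, hin, hin] at h
    simp only [hBk] at h
    fin_cases k <;>
      · simp [hXc, cB, nF] at h ⊢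
        linarith
  -- curvature in coordinates
  have hR4 : ∀ a b c d : EuclideanSpace ℝ (Fin 4),
      R a b c d = RP l1 l2 l3 l4 a b c d := by
    intro a b c d
    rw [hR, hin]
    simp only [PiLp.sub_apply, hnk, hBk]
    simp only [nF, cB, Matrix.cons_val_zero, Matrix.cons_val_one, Matrix.head_cons,
      Matrix.cons_val_two, Matrix.tail_cons, Matrix.cons_val_three]
    simp only [hnk, hBk]
    simp only [nF, cB, Matrix.cons_val_zero, Matrix.cons_val_one, Matrix.head_cons,
      Matrix.cons_val_two, Matrix.tail_cons, Matrix.cons_val_three]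
    rw [RP]
    ring
  have hrho : ∀ a b : EuclideanSpace ℝ (Fin 4),
      (∑ i, R (X i) a b (X i)) = RHO l1 l2 l3 l4 a b := by
    intro a b
    rw [Fin.sum_univ_four, hR4, hR4, hR4, hR4, hX0, hX1, hX2, hX3]
    exact rho_poly l1 l2 l3 l4 a b
  have htau : (∑ j, ∑ i, R (X i) (X j) (X j) (X i)) = TAU l1 l2 l3 l4 := by
    simp only [hrho]
    rw [Fin.sum_univ_four, hX0, hX1, hX2, hX3]
    exact tau_poly l1 l2 l3 l4
  intro x y z w
  rw [htau, hR4]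
  simp only [hrho]
  rw [hin x z, hin y z, hin x w, hin y w]
  delta RP RHO TAU
  ring
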